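/- For real a, b ≥ 0 with a + b > 0 and any nonzero real y, the limit as β → 0⁺ of |β^a · Γ(a + b + iy/β) / Γ(b + iy/β)| equals |y|^a. -/

import Mathlib

set_option maxHeartbeats 1000000

open Filter Real Complex Finset Topology

lemma log_le (z : ℝ) (hz : 0 ≤ z) : Real.log (1+z) ≤ z := by
  have := Real.log_le_sub_one_of_pos (x := 1+z) (by linarith); linarith

lemma le_log (z : ℝ) (hz : 0 ≤ z) : z - z^2 ≤ Real.log (1+z) := by
  have h1 : (0:ℝ) < 1 + z := by linarith
  have h2 : z/(1+z) ≤ Real.log (1+z) := by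
    have e : 1 - (1+z)⁻¹ = z/(1+z) := by field_simp; ring
    linarith [e ▸ Real.one_sub_inv_le_log_of_pos h1]
  have h3 : z - z^2 ≤ z/(1+z) := by
    rw [le_div_iff₀ h1]; nlinarith [pow_nonneg hz 3]
  linarith

noncomputable def Cc (a : ℝ) : ℝ := a*(1+a) + a^2*(8+2*a^2) + 10*a

lemma core (a u x : ℝ) (ha : 0 ≤ a) (hu : 0 ≤ u) (hx : 1 ≤ x^2) :
    |a * Real.log (((u+1)^2+x^2)/(u^2+x^2)) - Real.log (((u+a)^2+x^2)/(u^2+x^2))|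
      ≤ Cc a / (u^2+x^2) := by
  set s : ℝ := u^2+x^2 with hs
  have hs1 : (1:ℝ) ≤ s := by nlinarith
  have hs0 : (0:ℝ) < s := by linarith
  have e1 : ((u+1)^2+x^2)/s = 1 + (2*u+1)/s := by field_simp; ring
  have e2 : ((u+a)^2+x^2)/s = 1 + (a*(2*u+a))/s := by field_simp; ring
  rw [e1, e2]
  set h1 : ℝ := (2*u+1)/s with hh1
  set h2 : ℝ := (a*(2*u+a))/s with hh2
  have h1n : 0 ≤ h1 := by positivity
  have h2n : 0 ≤ h2 := by positivity
  have u1 := log_le h1 h1n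
  have u2 := log_le h2 h2n
  have l1 := le_log h1 h1n
  have l2 := le_log h2 h2n
  have hu2 : u^2 ≤ s := by nlinarith
  have b1 : h1^2 ≤ 10/s := by
    have e : (2*u+1)^2 ≤ 10*s := by nlinarith [sq_nonneg (2*u-1)]
    rw [hh1, div_pow, div_le_div_iff₀ (by positivity) hs0]
    calc (2*u+1)^2 * s ≤ (10*s)*s := mul_le_mul_of_nonneg_right e hs0.le
      _ = 10 * s^2 := by ring
  have b2 : h2^2 ≤ (a^2*(8+2*a^2))/s := by
    have e : (2*u+a)^2 ≤ (8+2*a^2)*s := by nlinarith [sq_nonneg (2*u-a)]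
    have e2 : a^2*(2*u+a)^2 ≤ a^2*((8+2*a^2)*s) :=
      mul_le_mul_of_nonneg_left e (by positivity)
    rw [hh2, div_pow, div_le_div_iff₀ (by positivity) hs0]
    calc (a*(2*u+a))^2 * s = (a^2*(2*u+a)^2)*s := by ring
      _ ≤ (a^2*((8+2*a^2)*s))*s := mul_le_mul_of_nonneg_right e2 hs0.le
      _ = a^2*(8+2*a^2)*s^2 := by ring
  have key1 : a*h1 - h2 = a*(1-a)/s := by rw [hh1, hh2]; field_simp; ring
  have X1 : a*(h1 - h1^2) ≤ a * Real.log (1+h1) := mul_le_mul_of_nonneg_left l1 ha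
  have X2 : a * Real.log (1+h1) ≤ a*h1 := mul_le_mul_of_nonneg_left u1 ha
  have ah1sq : a*h1^2 ≤ (10*a)/s := by
    rw [mul_comm 10 a, mul_div_assoc]; exact mul_le_mul_of_nonneg_left b1 ha
  rw [abs_le]
  constructor
  · have step : a*(1-a)/s - (10*a)/s ≤ a * Real.log (1+h1) - Real.log (1+h2) := by
      have e1 : a*(h1 - h1^2) = a*h1 - a*h1^2 := by ring
      linarith
    have step2 : (-(Cc a))/s ≤ a*(1-a)/s - (10*a)/s := by
      rw [div_sub_div_same, div_le_div_iff₀ hs0 hs0]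
      have h : -(Cc a) ≤ a*(1-a) - 10*a := by
        simp only [Cc]; nlinarith [sq_nonneg a, pow_nonneg ha 4]
      exact mul_le_mul_of_nonneg_right h hs0.le
    rw [neg_div] at step2
    linarith
  · have step : a * Real.log (1+h1) - Real.log (1+h2) ≤ a*(1-a)/s + (a^2*(8+2*a^2))/s := by
      linarith
    have step2 : a*(1-a)/s + (a^2*(8+2*a^2))/s ≤ Cc a / s := by
      rw [← add_div, div_le_div_iff₀ hs0 hs0]
      have h : a*(1-a) + a^2*(8+2*a^2) ≤ Cc a := by simp only [Cc]; nlinarith [sq_nonneg a]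
      exact mul_le_mul_of_nonneg_right h hs0.le
    linarith

lemma Cc_nonneg {a : ℝ} (ha : 0 ≤ a) : 0 ≤ Cc a := by unfold Cc; positivity


noncomputable def Kc : ℝ := ∑' j : ℕ, 1/((j:ℝ)+1)^((4:ℝ)/3)

lemma summable_aux : Summable (fun j:ℕ => 1/((j:ℝ)+1)^((4:ℝ)/3)) := by
  have h := (Real.summable_one_div_nat_rpow (p := (4:ℝ)/3)).2 (by norm_num)
  have h2 := h.comp_injective (add_left_injective 1)
  refine h2.congr fun j => ?_
  simp only [Function.comp_apply]
  push_cast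
  rfl

lemma Kc_nonneg : 0 ≤ Kc := tsum_nonneg (fun j => by positivity)

lemma sumb (b x : ℝ) (hb : 0 ≤ b) (hx : 1 ≤ x^2) (n : ℕ) :
    ∑ j ∈ range n, 1/((b+j)^2+x^2) ≤ 1/x^2 + Kc / |x|^((2:ℝ)/3) := by
  have hx0 : (0:ℝ) < x^2 := by linarith
  have hax : (1:ℝ) ≤ |x| := by nlinarith [abs_nonneg x, _root_.sq_abs x]
  have hax0 : (0:ℝ) < |x| := by linarith
  have hrp : (0:ℝ) < |x|^((2:ℝ)/3) := Real.rpow_pos_of_pos hax0 _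
  rcases n with _ | m
  · simp
    have := Kc_nonneg
    positivity
  rw [Finset.sum_range_succ']
  have h0 : 1/((b+(0:ℕ))^2+x^2) ≤ 1/x^2 := by
    apply one_div_le_one_div_of_le hx0
    push_cast
    nlinarith
  have htail : ∑ i ∈ range m, 1/((b+(i+1:ℕ))^2+x^2)
      ≤ Kc / |x|^((2:ℝ)/3) := by
    have hterm : ∀ i ∈ range m, 1/((b+(i+1:ℕ))^2+x^2)
        ≤ (1/((i:ℝ)+1)^((4:ℝ)/3)) / |x|^((2:ℝ)/3) := by
      intro i _
      have hj1 : (1:ℝ) ≤ (i:ℝ)+1 := by have := Nat.cast_nonneg (α:=ℝ) i; linarith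
      rw [div_div, one_div, one_div]
      apply inv_anti₀ (by positivity)
      have amgm := Real.geom_mean_le_arith_mean2_weighted (w₁ := 2/3) (w₂ := 1/3)
        (p₁ := ((i:ℝ)+1)^2) (p₂ := x^2) (by norm_num) (by norm_num) (by positivity)
        (by positivity) (by norm_num)
      have e1 : (((i:ℝ)+1)^2)^((2:ℝ)/3) = ((i:ℝ)+1)^((4:ℝ)/3) := by
        rw [← Real.rpow_natCast ((i:ℝ)+1) 2, ← Real.rpow_mul (by positivity)]
        norm_num
      have e2 : (x^2)^((1:ℝ)/3) = |x|^((2:ℝ)/3) := by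
        rw [← _root_.sq_abs, ← Real.rpow_natCast |x| 2, ← Real.rpow_mul (abs_nonneg x)]
        norm_num
      rw [e1, e2] at amgm
      push_cast
      nlinarith [mul_nonneg hb (by positivity : (0:ℝ) ≤ (i:ℝ)+1)]
    calc ∑ i ∈ range m, 1/((b+(i+1:ℕ))^2+x^2)
        ≤ ∑ i ∈ range m, (1/((i:ℝ)+1)^((4:ℝ)/3)) / |x|^((2:ℝ)/3) := Finset.sum_le_sum hterm
      _ = (∑ i ∈ range m, 1/((i:ℝ)+1)^((4:ℝ)/3)) / |x|^((2:ℝ)/3) := by rw [Finset.sum_div]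
      _ ≤ Kc / |x|^((2:ℝ)/3) := by
          gcongr
          exact Summable.sum_le_tsum _ (fun i _ => by positivity) summable_aux
  linarith


lemma absfac (c x : ℝ) (j : ℕ) :
    ‖((c:ℂ) + (x:ℂ)*Complex.I + (j:ℂ))‖ = Real.sqrt ((c+j)^2 + x^2) := by
  rw [Complex.norm_def, Complex.normSq_apply]
  have hre : ((c:ℂ) + (x:ℂ)*Complex.I + (j:ℂ)).re = c + j := by simp
  have him : ((c:ℂ) + (x:ℂ)*Complex.I + (j:ℂ)).im = x := by simp
  rw [hre, him]
  ring_nf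

lemma logAbsGS (c x : ℝ) (hx : x ≠ 0) (n : ℕ) (hn : 1 ≤ n) :
    Real.log (‖(Complex.GammaSeq ((c:ℂ) + (x:ℂ)*Complex.I) n)‖) =
      c * Real.log n + Real.log (n.factorial)
        - (1/2) * ∑ j ∈ range (n+1), Real.log ((c+j)^2 + x^2) := by
  have hn0 : (0:ℝ) < n := by exact_mod_cast hn
  have hfacpos : ∀ j : ℕ, (0:ℝ) < (c+j)^2 + x^2 := fun j => by positivity
  rw [Complex.GammaSeq, norm_div, norm_mul, norm_prod]
  have e1 : ‖((n:ℂ) ^ ((c:ℂ) + (x:ℂ)*Complex.I))‖ = (n:ℝ) ^ c := by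
    rw [show ((n:ℕ):ℂ) = (((n:ℕ):ℝ):ℂ) by push_cast; rfl]
    rw [Complex.norm_cpow_eq_rpow_re_of_pos hn0]
    simp
  have e2 : ‖((n.factorial : ℂ))‖ = (n.factorial : ℝ) := by
    rw [show ((n.factorial:ℕ):ℂ) = (((n.factorial:ℕ):ℝ):ℂ) by push_cast; rfl]
    exact Complex.norm_real _ |>.trans (abs_of_pos (by exact_mod_cast n.factorial_pos))
  have e3 : ∀ j ∈ range (n+1), ‖((c:ℂ) + (x:ℂ)*Complex.I + (j:ℂ))‖
      = Real.sqrt ((c+j)^2 + x^2) := fun j _ => absfac c x j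
  rw [e1, e2, Finset.prod_congr rfl e3]
  have hprodpos : (0:ℝ) < ∏ j ∈ range (n+1), Real.sqrt ((c+j)^2 + x^2) :=
    Finset.prod_pos (fun j _ => Real.sqrt_pos.2 (hfacpos j))
  rw [Real.log_div (by positivity) hprodpos.ne', Real.log_mul (by positivity)
    (by exact_mod_cast n.factorial_pos.ne'), Real.log_rpow hn0,
    Real.log_prod (fun j _ => (Real.sqrt_pos.2 (hfacpos j)).ne')]
  have e4 : ∀ j ∈ range (n+1), Real.log (Real.sqrt ((c+(j:ℝ))^2+x^2))
      = 1/2 * Real.log ((c+(j:ℝ))^2+x^2) := fun j _ => by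
    rw [Real.log_sqrt (hfacpos j).le]; ring
  rw [Finset.sum_congr rfl e4, ← Finset.mul_sum]


lemma log_sq_tendsto (c x : ℝ) (hx : 1 ≤ x^2) :
    Tendsto (fun n : ℕ => Real.log ((c+n)^2+x^2) - 2*Real.log n) atTop (𝓝 0) := by
  have h0 : Tendsto (fun n:ℕ => ((n:ℝ))⁻¹) atTop (𝓝 0) :=
    tendsto_inv_atTop_zero.comp tendsto_natCast_atTop_atTop
  have h1 : Tendsto (fun n:ℕ => (c*(n:ℝ)⁻¹+1)^2 + x^2*((n:ℝ)⁻¹)^2) atTop (𝓝 1) := by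
    have := (((h0.const_mul c).add_const 1).pow 2).add ((h0.pow 2).const_mul (x^2))
    norm_num at this
    convert this using 2 with n
    ring
  have h2 := h1.log (by norm_num)
  rw [Real.log_one] at h2
  apply h2.congr'
  filter_upwards [eventually_ge_atTop 1] with n hn
  have hn0 : (0:ℝ) < n := by exact_mod_cast hn
  have hpos : (0:ℝ) < (c+n)^2+x^2 := by nlinarith [sq_nonneg (c+(n:ℝ))]
  rw [show (c*(n:ℝ)⁻¹+1)^2 + x^2*((n:ℝ)⁻¹)^2 = ((c+n)^2+x^2)/(n:ℝ)^2 by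
    field_simp
    try ring]
  rw [Real.log_div hpos.ne' (by positivity)]
  rw [show ((n:ℝ)^2 : ℝ) = (n:ℝ)^(2:ℕ) by norm_num, Real.log_pow]
  push_cast
  ring

lemma gamma_arg_ne (c x : ℝ) (hx : x ≠ 0) : ∀ m : ℕ, (c:ℂ) + (x:ℂ)*Complex.I ≠ -m := by
  intro m h
  apply hx
  have := congrArg Complex.im h
  simpa using this

lemma key (a c x : ℝ) (ha : 0 ≤ a) (hc : 0 ≤ c) (hx1 : 1 ≤ x^2) :
    |2 * Real.log (‖(Complex.Gamma (((a+c:ℝ):ℂ) + (x:ℂ)*Complex.I)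
        / Complex.Gamma ((c:ℂ) + (x:ℂ)*Complex.I))‖)
      - a * Real.log (c^2+x^2)|
    ≤ Cc a * (1/x^2 + Kc / |x|^((2:ℝ)/3)) := by
  have hx : x ≠ 0 := by intro h; rw [h] at hx1; norm_num at hx1
  set W : ℂ := (c:ℂ) + (x:ℂ)*Complex.I with hW
  set W' : ℂ := ((a+c:ℝ):ℂ) + (x:ℂ)*Complex.I with hW'
  have hGW : Complex.Gamma W ≠ 0 := Complex.Gamma_ne_zero (gamma_arg_ne c x hx)
  have hGW' : Complex.Gamma W' ≠ 0 := Complex.Gamma_ne_zero (gamma_arg_ne (a+c) x hx)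
  set m : ℕ → ℝ := fun j => (c+j)^2+x^2 with hm
  set Mf : ℕ → ℝ := fun j => (a+c+j)^2+x^2 with hMf
  have hmpos : ∀ j, 0 < m j := fun j => by simp only [hm]; positivity
  have hMpos : ∀ j, 0 < Mf j := fun j => by simp only [hMf]; positivity
  set q : ℕ → ℝ := fun n => ‖(Complex.GammaSeq W' n)‖ /
    ‖(Complex.GammaSeq W n)‖ with hq
  set Q : ℝ := ‖(Complex.Gamma W' / Complex.Gamma W)‖ with hQ
  have hQpos : 0 < Q := by
    rw [hQ]
    exact norm_pos_iff.2 (div_ne_zero hGW' hGW)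
  -- q tends to Q
  have hqQ : Tendsto q atTop (𝓝 Q) := by
    have h1 : Tendsto (fun n => ‖(Complex.GammaSeq W' n)‖) atTop
        (𝓝 (‖(Complex.Gamma W')‖)) :=
      (continuous_norm.tendsto _).comp (Complex.GammaSeq_tendsto_Gamma W')
    have h2 : Tendsto (fun n => ‖(Complex.GammaSeq W n)‖) atTop
        (𝓝 (‖(Complex.Gamma W)‖)) :=
      (continuous_norm.tendsto _).comp (Complex.GammaSeq_tendsto_Gamma W)
    have := h1.div h2 (by simpa using hGW)
    rw [hQ, norm_div]
    exact this
  have hlogq : Tendsto (fun n => Real.log (q n)) atTop (𝓝 (Real.log Q)) :=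
    hqQ.log hQpos.ne'
  -- rho
  set ρ : ℕ → ℝ := fun n => a*(2*Real.log n - Real.log (m n))
    + (Real.log (m n) - Real.log (Mf n)) with hρ
  have hρ0 : Tendsto ρ atTop (𝓝 0) := by
    have e1 := log_sq_tendsto c x hx1
    have e2 := log_sq_tendsto (a+c) x hx1
    have : Tendsto (fun n : ℕ => a*(-(Real.log ((c+n)^2+x^2) - 2*Real.log n))
        + ((Real.log ((c+n)^2+x^2) - 2*Real.log n) - (Real.log ((a+c+n)^2+x^2) - 2*Real.log n)))
        atTop (𝓝 (a*(-0) + (0 - 0))) := ((e1.neg.const_mul a).add (e1.sub e2))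
    norm_num at this
    apply this.congr
    intro n
    simp only [hρ, hm, hMf]
    try ring
  -- T
  set t : ℕ → ℝ := fun j => a*(Real.log (m (j+1)) - Real.log (m j))
    - (Real.log (Mf j) - Real.log (m j)) with ht
  set T : ℕ → ℝ := fun n => ∑ j ∈ range n, t j with hT
  -- identity for n ≥ 1
  have hiden : ∀ n : ℕ, 1 ≤ n → 2 * Real.log (q n) - a * Real.log (m 0) - ρ n = T n := by
    intro n hn
    have l1 := logAbsGS (a+c) x hx n hn
    have l2 := logAbsGS c x hx n hn
    have hGSpos : ∀ (d : ℝ), (0:ℝ) < ‖(Complex.GammaSeq ((d:ℂ) + (x:ℂ)*Complex.I) n)‖ := by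
      intro d
      apply norm_pos_iff.2
      rw [Complex.GammaSeq]
      apply div_ne_zero (mul_ne_zero ?_ ?_) ?_
      · rw [Ne, Complex.cpow_eq_zero_iff]
        push_neg
        intro h
        exact absurd (by exact_mod_cast h : (n:ℂ) = 0) (by
          simp only [Ne, Nat.cast_eq_zero]
          omega)
      · exact_mod_cast (Nat.cast_ne_zero (R := ℂ)).2 n.factorial_pos.ne'
      · apply Finset.prod_ne_zero_iff.2
        intro j _
        intro h
        apply hx
        have := congrArg Complex.im h
        simpa using this
    -- log q n = logGS' - logGS
    have hlq : Real.log (q n) = Real.log (‖(Complex.GammaSeq W' n)‖)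
        - Real.log (‖(Complex.GammaSeq W n)‖) := by
      rw [hq, Real.log_div (hGSpos (a+c)).ne' (hGSpos c).ne']
    -- telescoping
    have htel : ∑ j ∈ range n, (Real.log (m (j+1)) - Real.log (m j))
        = Real.log (m n) - Real.log (m 0) :=
      Finset.sum_range_sub (fun j => Real.log (m j)) n
    have hTsplit : T n = a*(Real.log (m n) - Real.log (m 0))
        - ∑ j ∈ range n, (Real.log (Mf j) - Real.log (m j)) := by
      rw [hT, ht]
      simp only
      rw [Finset.sum_sub_distrib, ← Finset.mul_sum, htel]
    have hsum1 : ∑ j ∈ range (n+1), Real.log ((a+c+j)^2 + x^2)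
        = (∑ j ∈ range n, Real.log (Mf j)) + Real.log (Mf n) := by
      rw [Finset.sum_range_succ]
    have hsum2 : ∑ j ∈ range (n+1), Real.log ((c+j)^2 + x^2)
        = (∑ j ∈ range n, Real.log (m j)) + Real.log (m n) := by
      rw [Finset.sum_range_succ]
    rw [hlq, hW', hW, l1, l2, hsum1, hsum2, hTsplit, hρ]
    simp only
    rw [Finset.sum_sub_distrib]
    ring
  -- bound on T n
  have hTbound : ∀ n : ℕ, |T n| ≤ Cc a * (1/x^2 + Kc / |x|^((2:ℝ)/3)) := by
    intro n
    have h1 : |T n| ≤ ∑ j ∈ range n, |t j| := Finset.abs_sum_le_sum_abs _ _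
    have h2 : ∀ j ∈ range n, |t j| ≤ Cc a * (1/(m j)) := by
      intro j _
      have hco := core a (c+j) x ha (by positivity) hx1
      have e1 : (c+(j:ℝ))+1 = c+((j+1:ℕ):ℝ) := by push_cast; ring
      have e2 : (c+(j:ℝ))+a = a+c+(j:ℝ) := by ring
      rw [e1, e2] at hco
      rw [Real.log_div (hmpos (j+1)).ne' (hmpos j).ne',
        Real.log_div (hMpos j).ne' (hmpos j).ne'] at hco
      have : t j = a * (Real.log (m (j+1)) - Real.log (m j))
          - (Real.log (Mf j) - Real.log (m j)) := by rw [ht]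
      rw [this]
      calc |a * (Real.log (m (j+1)) - Real.log (m j)) - (Real.log (Mf j) - Real.log (m j))|
          ≤ Cc a / ((c+(j:ℝ))^2 + x^2) := hco
        _ = Cc a * (1/(m j)) := by rw [hm]; simp only; ring
    have h3 : ∑ j ∈ range n, |t j| ≤ ∑ j ∈ range n, Cc a * (1/(m j)) :=
      Finset.sum_le_sum h2
    have h4 : ∑ j ∈ range n, Cc a * (1/(m j)) = Cc a * ∑ j ∈ range n, 1/(m j) := by
      rw [Finset.mul_sum]
    have h5 : ∑ j ∈ range n, 1/(m j) ≤ 1/x^2 + Kc / |x|^((2:ℝ)/3) := sumb c x hc hx1 n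
    have h6 := mul_le_mul_of_nonneg_left h5 (Cc_nonneg ha)
    linarith
  -- pass to the limit
  have hTlim : Tendsto T atTop (𝓝 (2 * Real.log Q - a * Real.log (m 0))) := by
    have h1 : Tendsto (fun n => 2 * Real.log (q n) - a * Real.log (m 0) - ρ n) atTop
        (𝓝 (2 * Real.log Q - a * Real.log (m 0) - 0)) :=
      ((hlogq.const_mul 2).sub_const (a * Real.log (m 0))).sub hρ0
    rw [sub_zero] at h1
    apply h1.congr'
    filter_upwards [eventually_ge_atTop 1] with n hn
    exact hiden n hn
  have hfin : |2 * Real.log Q - a * Real.log (m 0)| ≤ Cc a * (1/x^2 + Kc / |x|^((2:ℝ)/3)) := by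
    apply le_of_tendsto hTlim.abs
    filter_upwards with n
    exact hTbound n
  have e0 : m 0 = c^2 + x^2 := by rw [hm]; simp
  rw [← e0]
  exact hfin


/-- For a, b ≥ 0 with a + b > 0 and y ≠ 0, the limit as β → 0⁺ of
`|β^a · Γ(a + b + iy/β) / Γ(b + iy/β)|` equals `|y|^a`. -/
theorem stmt1 (a b y : ℝ) (ha : 0 ≤ a) (hb : 0 ≤ b) (hab : 0 < a + b) (hy : y ≠ 0) :
    Tendsto
      (fun β : ℝ =>
        ‖((β : ℂ) ^ (a : ℂ) *
          Complex.Gamma ((a : ℂ) + (b : ℂ) + Complex.I * (y / β : ℝ)) /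
          Complex.Gamma ((b : ℂ) + Complex.I * (y / β : ℝ)))‖)
      (nhdsWithin 0 (Set.Ioi 0)) (nhds (|y| ^ a)) := by
  have hay : 0 < |y| := abs_pos.2 hy
  -- notation
  set L : ℝ → ℝ := fun β => Real.log (‖(Complex.Gamma ((a : ℂ) + (b : ℂ) + Complex.I * ((y / β : ℝ):ℂ)) /
       Complex.Gamma ((b : ℂ) + Complex.I * ((y / β : ℝ):ℂ)))‖) with hL
  set e : ℝ → ℝ := fun β => L β - (a/2) * Real.log (b^2 + (y/β)^2) with he
  set G : ℝ → ℝ := fun β => (a/2) * Real.log (β^2*b^2 + y^2) + e β with hG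
  -- step 1 : eventual equality with exp ∘ G
  have heq : ∀ᶠ β : ℝ in (𝓝[>] (0:ℝ)), ‖((β : ℂ) ^ (a : ℂ) *
          Complex.Gamma ((a : ℂ) + (b : ℂ) + Complex.I * (y / β : ℝ)) /
          Complex.Gamma ((b : ℂ) + Complex.I * (y / β : ℝ)))‖ = Real.exp (G β) := by
    filter_upwards [self_mem_nhdsWithin] with β (hβ : 0 < β)
    have hx : y/β ≠ 0 := div_ne_zero hy hβ.ne'
    have harg1 : (a : ℂ) + (b : ℂ) + Complex.I * ((y/β : ℝ):ℂ)
        = ((a+b:ℝ):ℂ) + ((y/β:ℝ):ℂ)*Complex.I := by push_cast; ring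
    have harg2 : (b : ℂ) + Complex.I * ((y/β : ℝ):ℂ)
        = ((b:ℝ):ℂ) + ((y/β:ℝ):ℂ)*Complex.I := by push_cast; ring
    have hG1 : Complex.Gamma ((a : ℂ) + (b : ℂ) + Complex.I * ((y/β : ℝ):ℂ)) ≠ 0 := by
      rw [harg1]; exact Complex.Gamma_ne_zero (gamma_arg_ne (a+b) (y/β) hx)
    have hG2 : Complex.Gamma ((b : ℂ) + Complex.I * ((y/β : ℝ):ℂ)) ≠ 0 := by
      rw [harg2]; exact Complex.Gamma_ne_zero (gamma_arg_ne b (y/β) hx)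
    have hsplit : ‖((β : ℂ) ^ (a : ℂ) *
          Complex.Gamma ((a : ℂ) + (b : ℂ) + Complex.I * (y / β : ℝ)) /
          Complex.Gamma ((b : ℂ) + Complex.I * (y / β : ℝ)))‖
        = ‖((β : ℂ) ^ (a : ℂ))‖ * ‖(Complex.Gamma ((a : ℂ) + (b : ℂ) + Complex.I * (y / β : ℝ)) /
           Complex.Gamma ((b : ℂ) + Complex.I * (y / β : ℝ)))‖ := by
      rw [mul_div_assoc, norm_mul]
    rw [hsplit]
    have habsb : ‖((β : ℂ) ^ (a : ℂ))‖ = β ^ a := by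
      rw [Complex.norm_cpow_eq_rpow_re_of_pos hβ]
      simp
    have hQpos : 0 < ‖(Complex.Gamma ((a : ℂ) + (b : ℂ) + Complex.I * (y / β : ℝ)) /
           Complex.Gamma ((b : ℂ) + Complex.I * (y / β : ℝ)))‖ :=
      norm_pos_iff.2 (div_ne_zero hG1 hG2)
    rw [habsb, Real.rpow_def_of_pos hβ, ← Real.exp_log hQpos, ← Real.exp_add]
    congr 1
    -- log β * a + L β = G β
    have hbx : (0:ℝ) < b^2 + (y/β)^2 := by positivity
    have hkey : Real.log β * a + (a/2) * Real.log (b^2 + (y/β)^2)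
        = (a/2) * Real.log (β^2*b^2 + y^2) := by
      have e1 : Real.log (β^2) = 2 * Real.log β := by
        rw [show (β^2 : ℝ) = β^(2:ℕ) by norm_num, Real.log_pow]
        push_cast; ring
      have e2 : β^2*(b^2 + (y/β)^2) = β^2*b^2 + y^2 := by field_simp; try ring
      rw [← e2, Real.log_mul (by positivity) hbx.ne', e1]
      ring
    rw [hG, he, hL]
    simp only
    linarith
  -- step 2 : tendsto of exp ∘ G
  have hmain : Tendsto (fun β => Real.exp (G β)) (𝓝[>] (0:ℝ)) (𝓝 (|y|^a)) := by
    have he0 : Tendsto e (𝓝[>] (0:ℝ)) (𝓝 0) := by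
      -- squeeze
      have hbound : ∀ᶠ β in (𝓝[>] (0:ℝ)),
          ‖e β‖ ≤ (Cc a/2) * (β^2/y^2 + Kc * β^((2:ℝ)/3)/|y|^((2:ℝ)/3)) := by
        filter_upwards [Ioo_mem_nhdsGT_of_mem (Set.left_mem_Ico.2 hay)] with β hβm
        obtain ⟨hβ, hβy⟩ := hβm
        set x := y/β with hxd
        have hx1 : 1 ≤ x^2 := by
          rw [hxd, div_pow, le_div_iff₀ (by positivity)]
          have h1 : β ≤ |y| := le_of_lt hβy
          have h2 : β^2 ≤ |y|^2 := by nlinarith [abs_nonneg y]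
          rw [_root_.sq_abs] at h2
          linarith
        have hk := key a b x ha hb hx1
        have harg1 : ((a+b:ℝ):ℂ) + ((x:ℝ):ℂ)*Complex.I
            = (a : ℂ) + (b : ℂ) + Complex.I * ((x:ℝ):ℂ) := by push_cast; ring
        have harg2 : ((b:ℝ):ℂ) + ((x:ℝ):ℂ)*Complex.I
            = (b : ℂ) + Complex.I * ((x:ℝ):ℂ) := by push_cast; ring
        rw [harg1, harg2] at hk
        have hee : e β = (1/2) * (2 * L β - a * Real.log (b^2+x^2)) := by
          rw [he]; simp only; ring
        have hxabs : |x| = |y|/β := by rw [hxd, abs_div, abs_of_pos hβ]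
        have hconv1 : 1/x^2 = β^2/y^2 := by
          rw [hxd]; field_simp
        have hconv2 : Kc / |x|^((2:ℝ)/3) = Kc * β^((2:ℝ)/3)/|y|^((2:ℝ)/3) := by
          rw [hxabs, Real.div_rpow (abs_nonneg y) hβ.le]
          field_simp
        rw [hee, Real.norm_eq_abs, abs_mul, abs_of_pos (by norm_num : (0:ℝ) < 1/2)]
        rw [hconv1, hconv2] at hk
        calc 1/2 * |2 * L β - a * Real.log (b^2+x^2)|
            ≤ 1/2 * (Cc a * (β^2/y^2 + Kc * β^((2:ℝ)/3)/|y|^((2:ℝ)/3))) := by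
              apply mul_le_mul_of_nonneg_left _ (by norm_num)
              exact hk
          _ = (Cc a/2) * (β^2/y^2 + Kc * β^((2:ℝ)/3)/|y|^((2:ℝ)/3)) := by ring
      have hlim0 : Tendsto (fun β : ℝ => (Cc a/2) * (β^2/y^2 + Kc * β^((2:ℝ)/3)/|y|^((2:ℝ)/3)))
          (𝓝[>] (0:ℝ)) (𝓝 0) := by
        have t1 : Tendsto (fun β : ℝ => β^2/y^2) (𝓝 (0:ℝ)) (𝓝 0) := by
          have := ((continuous_pow 2).tendsto (0:ℝ)).div_const (y^2)
          norm_num at this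
          exact this
        have t2 : Tendsto (fun β : ℝ => β^((2:ℝ)/3)) (𝓝 (0:ℝ)) (𝓝 0) := by
          have hc := (Real.continuousAt_rpow_const 0 ((2:ℝ)/3) (Or.inr (by norm_num)))
          have : (0:ℝ)^((2:ℝ)/3) = 0 := Real.zero_rpow (by norm_num)
          rw [ContinuousAt, this] at hc
          exact hc
        have t3 : Tendsto (fun β : ℝ => Kc * β^((2:ℝ)/3)/|y|^((2:ℝ)/3)) (𝓝 (0:ℝ)) (𝓝 0) := by
          have := (t2.const_mul Kc).div_const (|y|^((2:ℝ)/3))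
          norm_num at this
          convert this using 2 with β
          try ring
        have := ((t1.add t3).const_mul (Cc a/2))
        norm_num at this
        exact this.mono_left nhdsWithin_le_nhds
      exact squeeze_zero_norm' hbound hlim0
    have hlog : Tendsto (fun β : ℝ => (a/2) * Real.log (β^2*b^2 + y^2)) (𝓝[>] (0:ℝ))
        (𝓝 (a * Real.log |y|)) := by
      have t1 : Tendsto (fun β : ℝ => β^2*b^2 + y^2) (𝓝 (0:ℝ)) (𝓝 (y^2)) := by
        have := (((continuous_pow 2).tendsto (0:ℝ)).mul_const (b^2)).add_const (y^2)
        norm_num at this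
        exact this
      have t2 := (t1.log (by positivity)).const_mul (a/2)
      have e1 : (a/2) * Real.log (y^2) = a * Real.log |y| := by
        rw [← _root_.sq_abs, show (|y|^2 : ℝ) = |y|^(2:ℕ) by norm_num, Real.log_pow]
        push_cast; ring
      rw [e1] at t2
      exact t2.mono_left nhdsWithin_le_nhds
    have hsum : Tendsto G (𝓝[>] (0:ℝ)) (𝓝 (a * Real.log |y|)) := by
      have := hlog.add he0
      rw [add_zero] at this
      exact this
    have := (Real.continuous_exp.tendsto _).comp hsum
    have e2 : Real.exp (a * Real.log |y|) = |y|^a := by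
      rw [Real.rpow_def_of_pos hay]; ring_nf
    rw [Function.comp_def, e2] at this
    exact this
  exact Tendsto.congr' (EventuallyEq.symm heq) hmain
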